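/- Let G be a finite simple graph with at least one edge and minimum degree delta(G) >= 1, and let m = |E(G)|. Then rho_e^o(G) * delta(G) = m if and only if G is a disjoint union of stars or G belongs to the family F. -/

import Mathlib

open scoped Classical

variable {V : Type*}

/-- Two edges `e₁, e₂` have a common edge in `G` if some edge of `G`, different from both,
joins an endvertex of `e₁` to an endvertex of `e₂`. -/
def HasCommonEdge (G : SimpleGraph V) (e₁ e₂ : Sym2 V) : Prop :=
  ∃ x y : V, x ∈ e₁ ∧ y ∈ e₂ ∧ G.Adj x y ∧ s(x, y) ≠ e₁ ∧ s(x, y) ≠ e₂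

/-- `B` is an edge open packing set of `G`: a set of edges of `G` no two distinct members
of which have a common edge in `G`. -/
def IsEOP (G : SimpleGraph V) (B : Set (Sym2 V)) : Prop :=
  B ⊆ G.edgeSet ∧ ∀ e₁ ∈ B, ∀ e₂ ∈ B, e₁ ≠ e₂ → ¬ HasCommonEdge G e₁ e₂

/-- The edge open packing number of `G`: the maximum cardinality of an EOP set of `G`. -/
noncomputable def eopNum (G : SimpleGraph V) : ℕ :=
  sSup {n | ∃ B : Set (Sym2 V), IsEOP G B ∧ B.ncard = n}

/-- `G` is a disjoint union of stars `K_{1,t}` (`t ≥ 1`): it has no isolated vertices and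
every edge has an endvertex of degree `1`; equivalently, every connected component of `G`
is a star. -/
def IsDisjointUnionOfStars (G : SimpleGraph V) : Prop :=
  (∀ v : V, (G.neighborSet v).Nonempty) ∧
  (∀ a b : V, G.Adj a b → (G.neighborSet a).ncard = 1 ∨ (G.neighborSet b).ncard = 1)

/-- `G` belongs to the family `ℱ`: `G` is bipartite with minimum degree `k ≥ 2`, its vertex
set partitions into `A`, `B`, `C` with partite sets `A ∪ C` and `B`, and every vertex of `B`
has exactly one neighbor in `A` and exactly `k - 1` neighbors in `C`. -/
def InFamilyF (G : SimpleGraph V) [Fintype V] : Prop :=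
  2 ≤ G.minDegree ∧
  ∃ A B C : Set V,
    A ∪ B ∪ C = Set.univ ∧ A ∩ B = ∅ ∧ A ∩ C = ∅ ∧ B ∩ C = ∅ ∧
    (∀ a b : V, G.Adj a b → (a ∈ A ∪ C ∧ b ∈ B) ∨ (a ∈ B ∧ b ∈ A ∪ C)) ∧
    (∀ b ∈ B, (G.neighborSet b ∩ A).ncard = 1 ∧
      (G.neighborSet b ∩ C).ncard = G.minDegree - 1)

set_option linter.unusedSectionVars false

section Aux
variable [Fintype V] {G : SimpleGraph V}

omit [Fintype V] in
private lemma sym2_eq {u v : V} {z : Sym2 V} (huv : u ≠ v) (hu : u ∈ z) (hv : v ∈ z) :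
    z = s(u, v) := (Sym2.mem_and_mem_iff huv).1 ⟨hu, hv⟩

private lemma exists_leaf {P : Set (Sym2 V)} (hP : IsEOP G P) {e : Sym2 V} (he : e ∈ P) :
    ∃ v, v ∈ e ∧ ∀ e' ∈ P, e' ≠ e → v ∉ e' := by
  have he' : e ∈ G.edgeSet := hP.1 he
  induction e with
  | _ u v =>
    by_contra hcon
    push_neg at hcon
    have huv : G.Adj u v := he'
    obtain ⟨e1, he1, hne1, hu1⟩ := hcon u (by simp)
    obtain ⟨e2, he2, hne2, hv2⟩ := hcon v (by simp)
    by_cases h12 : e1 = e2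
    · subst h12
      exact hne1 (sym2_eq huv.ne hu1 hv2)
    · exact hP.2 e1 he1 e2 he2 h12 ⟨u, v, hu1, hv2, huv, fun h => hne1 h.symm, fun h => hne2 h.symm⟩

private lemma nbr_ncard (v : V) : (G.neighborSet v).ncard = G.degree v := by
  rw [Set.ncard_eq_toFinset_card', Set.toFinset_card]
  exact G.card_neighborSet_eq_degree v

/-- Core counting lemma. -/
private lemma eop_count {P : Set (Sym2 V)} (hP : IsEOP G P) (ℓ : Sym2 V → V)
    (h1 : ∀ e ∈ P, ℓ e ∈ e) (h2 : ∀ e ∈ P, ∀ e' ∈ P, e' ≠ e → ℓ e ∉ e') :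
    (∑ e ∈ (Set.toFinite P).toFinset, G.degree (ℓ e)) ≤ G.edgeSet.ncard ∧
    ((∑ e ∈ (Set.toFinite P).toFinset, G.degree (ℓ e)) = G.edgeSet.ncard →
      ∀ f ∈ G.edgeSet, ∃ e ∈ P, ℓ e ∈ f) := by
  set F := (Set.toFinite P).toFinset with hF
  have hmemF : ∀ e, e ∈ F ↔ e ∈ P := by intro e; rw [hF, Set.Finite.mem_toFinset]
  -- disjointness
  have hdisj : ∀ e1 ∈ F, ∀ e2 ∈ F, e1 ≠ e2 →
      Disjoint (G.incidenceFinset (ℓ e1)) (G.incidenceFinset (ℓ e2)) := by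
    intro e1 h1F e2 h2F hne
    rw [hmemF] at h1F h2F
    rw [Finset.disjoint_left]
    intro f hf1 hf2
    rw [SimpleGraph.mem_incidenceFinset] at hf1 hf2
    obtain ⟨hfE, hm1⟩ := hf1
    obtain ⟨_, hm2⟩ := hf2
    have hll : ℓ e1 ≠ ℓ e2 := by
      intro h
      exact h2 e1 h1F e2 h2F (fun hh => hne hh.symm) (h ▸ h1 e2 h2F)
    have hfeq : f = s(ℓ e1, ℓ e2) := sym2_eq hll hm1 hm2
    have hne1 : s(ℓ e1, ℓ e2) ≠ e1 := by
      intro h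
      exact h2 e2 h2F e1 h1F hne (h ▸ (by simp : ℓ e2 ∈ s(ℓ e1, ℓ e2)))
    have hne2 : s(ℓ e1, ℓ e2) ≠ e2 := by
      intro h
      exact h2 e1 h1F e2 h2F (fun hh => hne hh.symm) (h ▸ (by simp : ℓ e1 ∈ s(ℓ e1, ℓ e2)))
    exact hP.2 e1 h1F e2 h2F hne ⟨ℓ e1, ℓ e2, h1 e1 h1F, h1 e2 h2F, (by rw [← SimpleGraph.mem_edgeSet, ← hfeq]; exact hfE), hne1, hne2⟩
  have hcard : (F.biUnion fun e => G.incidenceFinset (ℓ e)).card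
      = ∑ e ∈ F, G.degree (ℓ e) := by
    rw [Finset.card_biUnion hdisj]
    exact Finset.sum_congr rfl fun e _ => G.card_incidenceFinset_eq_degree (ℓ e)
  have hsub : (F.biUnion fun e => G.incidenceFinset (ℓ e)) ⊆ G.edgeFinset := by
    intro f hf
    obtain ⟨e, _, hfe⟩ := Finset.mem_biUnion.1 hf
    rw [SimpleGraph.mem_incidenceFinset] at hfe
    exact SimpleGraph.mem_edgeFinset.2 hfe.1
  have hm : G.edgeSet.ncard = G.edgeFinset.card := by
    rw [Set.ncard_eq_toFinset_card', ← SimpleGraph.edgeFinset]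
  constructor
  · rw [hm, ← hcard]
    exact Finset.card_le_card hsub
  · intro heq f hf
    have : (F.biUnion fun e => G.incidenceFinset (ℓ e)) = G.edgeFinset :=
      Finset.eq_of_subset_of_card_le hsub (by rw [hcard, heq, hm])
    have hfU : f ∈ F.biUnion fun e => G.incidenceFinset (ℓ e) := by
      rw [this]; exact SimpleGraph.mem_edgeFinset.2 hf
    obtain ⟨e, heF, hfe⟩ := Finset.mem_biUnion.1 hfU
    rw [SimpleGraph.mem_incidenceFinset] at hfe
    exact ⟨e, (hmemF e).1 heF, hfe.2⟩

end Aux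

section Aux2
variable [Fintype V] [Nonempty V] {G : SimpleGraph V}

private lemma eop_bdd :
    BddAbove {n | ∃ B : Set (Sym2 V), IsEOP G B ∧ B.ncard = n} := by
  refine ⟨G.edgeSet.ncard, ?_⟩
  rintro n ⟨B, hB, rfl⟩
  exact Set.ncard_le_ncard hB.1 (Set.toFinite _)

private lemma exists_max_eop :
    ∃ P : Set (Sym2 V), IsEOP G P ∧ P.ncard = eopNum G := by
  have h0 : (0 : ℕ) ∈ {n | ∃ B : Set (Sym2 V), IsEOP G B ∧ B.ncard = n} :=
    ⟨∅, ⟨Set.empty_subset _, by simp⟩, by simp⟩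
  have := Nat.sSup_mem ⟨0, h0⟩ (eop_bdd (G := G))
  exact this

private lemma le_eopNum {P : Set (Sym2 V)} (hP : IsEOP G P) : P.ncard ≤ eopNum G :=
  le_csSup eop_bdd ⟨P, hP, rfl⟩

private lemma eop_bound {P : Set (Sym2 V)} (hP : IsEOP G P) :
    P.ncard * G.minDegree ≤ G.edgeSet.ncard := by
  have hex : ∀ e ∈ P, ∃ v, v ∈ e ∧ ∀ e' ∈ P, e' ≠ e → v ∉ e' :=
    fun e he => exists_leaf hP he
  choose! ℓ h1 h2 using hex
  have hc := eop_count hP ℓ h1 h2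
  calc P.ncard * G.minDegree = ∑ _e ∈ (Set.toFinite P).toFinset, G.minDegree := by
        rw [Finset.sum_const, smul_eq_mul, Set.ncard_eq_toFinset_card P (Set.toFinite P),
          Nat.mul_comm]
    _ ≤ ∑ e ∈ (Set.toFinite P).toFinset, G.degree (ℓ e) :=
        Finset.sum_le_sum fun e _ => G.minDegree_le_degree (ℓ e)
    _ ≤ G.edgeSet.ncard := hc.1

private lemma eopNum_mul_le : eopNum G * G.minDegree ≤ G.edgeSet.ncard := by
  obtain ⟨P, hP, hcard⟩ := exists_max_eop (G := G)
  rw [← hcard]; exact eop_bound hP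

end Aux2

section Aux3
set_option linter.unusedSectionVars false
variable [Fintype V] {G : SimpleGraph V}

private lemma edge_rep {e : Sym2 V} (he : e ∈ G.edgeSet) {x : V} (hx : x ∈ e) :
    ∃ y, G.Adj x y ∧ e = s(x, y) := by
  induction e with
  | _ u v =>
    have h : G.Adj u v := he
    rcases Sym2.mem_iff.1 hx with rfl | rfl
    · exact ⟨v, h, rfl⟩
    · exact ⟨u, h.symm, Sym2.eq_swap⟩

private lemma uniq_nbr {v w w' : V} (h : (G.neighborSet v).ncard = 1)
    (h1 : G.Adj v w) (h2 : G.Adj v w') : w = w' := by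
  obtain ⟨a, ha⟩ := Set.ncard_eq_one.1 h
  have hw : w ∈ G.neighborSet v := h1
  have hw' : w' ∈ G.neighborSet v := h2
  rw [ha] at hw hw'
  rw [Set.mem_singleton_iff.1 hw, Set.mem_singleton_iff.1 hw']

private lemma edge_eop_of_stars (hs : IsDisjointUnionOfStars G) : IsEOP G G.edgeSet := by
  refine ⟨subset_rfl, ?_⟩
  rintro e1 he1 e2 he2 hne ⟨x, y, hx, hy, hadj, ne1, ne2⟩
  rcases hs.2 x y hadj with h | h
  · obtain ⟨x', hxx', hrep⟩ := edge_rep he1 hx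
    exact ne1 (by rw [uniq_nbr h hadj hxx']; exact hrep.symm)
  · obtain ⟨y', hyy', hrep⟩ := edge_rep he2 hy
    exact ne2 (by rw [Sym2.eq_swap, uniq_nbr h hadj.symm hyy']; exact hrep.symm)

private lemma minDegree_eq_one_of_stars (hs : IsDisjointUnionOfStars G)
    (hE : G.edgeSet.Nonempty) (hδ : 1 ≤ G.minDegree) : G.minDegree = 1 := by
  obtain ⟨e, he⟩ := hE
  obtain ⟨u, hu⟩ : ∃ u, u ∈ e := ⟨e.out.1, Sym2.out_fst_mem e⟩
  obtain ⟨v, huv, _⟩ := edge_rep he hu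
  have key : ∀ w : V, (G.neighborSet w).ncard = 1 → G.minDegree = 1 := by
    intro w hw
    have := G.minDegree_le_degree w
    rw [← nbr_ncard, hw] at this
    omega
  rcases hs.2 u v huv with h | h
  · exact key u h
  · exact key v h

private lemma stars_of_eop_edgeSet (hδ : 1 ≤ G.minDegree) (hP : IsEOP G G.edgeSet) :
    IsDisjointUnionOfStars G := by
  constructor
  · intro v
    have h : 0 < G.degree v := lt_of_lt_of_le Nat.zero_lt_one (hδ.trans (G.minDegree_le_degree v))
    obtain ⟨w, hw⟩ := G.degree_pos_iff_exists_adj v |>.1 h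
    exact ⟨w, hw⟩
  · intro a b hab
    by_contra hcon
    push_neg at hcon
    obtain ⟨h1, h2⟩ := hcon
    have hget : ∀ x y : V, G.Adj x y → (G.neighborSet x).ncard ≠ 1 →
        ∃ c ∈ G.neighborSet x, c ≠ y := by
      intro x y hxy hx1
      by_contra hno
      push_neg at hno
      have : G.neighborSet x = {y} :=
        Set.Subset.antisymm (fun z hz => Set.mem_singleton_iff.2 (hno z hz))
          (Set.singleton_subset_iff.2 hxy)
      exact hx1 (by rw [this]; exact Set.ncard_singleton y)
    obtain ⟨c, hc, hcb⟩ := hget a b hab h1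
    obtain ⟨d, hd, hda⟩ := hget b a hab.symm h2
    have he1 : s(a, c) ∈ G.edgeSet := hc
    have he2 : s(b, d) ∈ G.edgeSet := hd
    have hne : s(a, c) ≠ s(b, d) := by
      intro h
      have ha : a ∈ s(b, d) := by rw [← h]; simp
      rcases Sym2.mem_iff.1 ha with rfl | rfl
      · exact hab.ne rfl
      · exact hda rfl
    refine hP.2 _ he1 _ he2 hne ⟨a, b, by simp, by simp, hab, ?_, ?_⟩
    · intro h
      have hb : b ∈ s(a, c) := by rw [← h]; simp
      rcases Sym2.mem_iff.1 hb with rfl | rfl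
      · exact hab.ne rfl
      · exact hcb rfl
    · intro h
      have ha : a ∈ s(b, d) := by rw [← h]; simp
      rcases Sym2.mem_iff.1 ha with rfl | rfl
      · exact hab.ne rfl
      · exact hda rfl

private lemma star_case (hs : IsDisjointUnionOfStars G) (hE : G.edgeSet.Nonempty)
    (hδ : 1 ≤ G.minDegree) : eopNum G * G.minDegree = G.edgeSet.ncard := by
  have hNe : Nonempty V := by
    obtain ⟨e, he⟩ := hE
    exact ⟨e.out.1⟩
  rw [minDegree_eq_one_of_stars hs hE hδ, mul_one]
  refine le_antisymm ?_ (le_eopNum (edge_eop_of_stars hs))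
  obtain ⟨P, hP, hcard⟩ := exists_max_eop (G := G)
  rw [← hcard]
  exact Set.ncard_le_ncard hP.1 (Set.toFinite _)

end Aux3

section Aux4
set_option linter.unusedSectionVars false
variable [Fintype V] {G : SimpleGraph V}

private lemma familyF_case (hF : InFamilyF G) (hE : G.edgeSet.Nonempty) :
    eopNum G * G.minDegree = G.edgeSet.ncard := by
  have hNe : Nonempty V := ⟨(Classical.choice (by
    obtain ⟨e, _⟩ := hE; exact ⟨e.out.1⟩ : Nonempty V))⟩
  obtain ⟨hk, A, B, C, hUniv, hAB, hAC, hBC, hbip, hdeg⟩ := hF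
  set k := G.minDegree with hkdef
  have hACB : ∀ x, x ∈ A ∪ C → x ∉ B := by
    intro x hx hxB
    rcases hx with hx | hx
    · exact Set.eq_empty_iff_forall_notMem.1 hAB x ⟨hx, hxB⟩
    · exact Set.eq_empty_iff_forall_notMem.1 hBC x ⟨hxB, hx⟩
  have hone : ∀ x y, G.Adj x y → (x ∉ B ∧ y ∈ B) ∨ (x ∈ B ∧ y ∉ B) := by
    intro x y hxy
    rcases hbip x y hxy with ⟨hx, hy⟩ | ⟨hx, hy⟩
    · exact Or.inl ⟨hACB x hx, hy⟩
    · exact Or.inr ⟨hx, hACB y hy⟩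
  -- degree of each b in B is k
  have hdegB : ∀ b ∈ B, G.degree b = k := by
    intro b hb
    have hsplit : G.neighborSet b = (G.neighborSet b ∩ A) ∪ (G.neighborSet b ∩ C) := by
      apply Set.Subset.antisymm
      · intro y hy
        have hyB : y ∉ B := by
          rcases hone b y hy with ⟨hbB, _⟩ | ⟨_, hyB⟩
          · exact absurd hb hbB
          · exact hyB
        have hyU : y ∈ A ∪ B ∪ C := by rw [hUniv]; trivial
        rcases hyU with (hyA | hyB') | hyC
        · exact Or.inl ⟨hy, hyA⟩
        · exact absurd hyB' hyB
        · exact Or.inr ⟨hy, hyC⟩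
      · intro y hy; rcases hy with ⟨hy, _⟩ | ⟨hy, _⟩ <;> exact hy
    have hdisj : Disjoint (G.neighborSet b ∩ A) (G.neighborSet b ∩ C) := by
      rw [Set.disjoint_left]
      rintro y ⟨_, hyA⟩ ⟨_, hyC⟩
      exact Set.eq_empty_iff_forall_notMem.1 hAC y ⟨hyA, hyC⟩
    have := nbr_ncard (G := G) b
    nth_rw 1 [hsplit] at this
    rw [Set.ncard_union_eq hdisj (Set.toFinite _) (Set.toFinite _),
      (hdeg b hb).1, (hdeg b hb).2] at this
    omega
  -- m = B.ncard * k
  set Bfin := (Set.toFinite B).toFinset with hBfin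
  have hmemB : ∀ b, b ∈ Bfin ↔ b ∈ B := fun b => Set.Finite.mem_toFinset _
  have hcover : G.edgeFinset = Bfin.biUnion fun b => G.incidenceFinset b := by
    apply Finset.Subset.antisymm
    · intro f hf
      have hfE : f ∈ G.edgeSet := SimpleGraph.mem_edgeFinset.1 hf
      induction f with
      | _ x y =>
        have hxy : G.Adj x y := hfE
        rcases hone x y hxy with ⟨_, hy⟩ | ⟨hx, _⟩
        · exact Finset.mem_biUnion.2 ⟨y, (hmemB y).2 hy,
            (G.mem_incidenceFinset y _).2 ⟨hfE, by simp⟩⟩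
        · exact Finset.mem_biUnion.2 ⟨x, (hmemB x).2 hx,
            (G.mem_incidenceFinset x _).2 ⟨hfE, by simp⟩⟩
    · intro f hf
      obtain ⟨b, _, hfb⟩ := Finset.mem_biUnion.1 hf
      exact SimpleGraph.mem_edgeFinset.2 ((G.mem_incidenceFinset b f).1 hfb).1
  have hdisjB : ∀ b1 ∈ Bfin, ∀ b2 ∈ Bfin, b1 ≠ b2 →
      Disjoint (G.incidenceFinset b1) (G.incidenceFinset b2) := by
    intro b1 h1 b2 h2 hne
    rw [hmemB] at h1 h2
    rw [Finset.disjoint_left]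
    intro f hf1 hf2
    obtain ⟨hfE, hm1⟩ := (G.mem_incidenceFinset b1 f).1 hf1
    obtain ⟨_, hm2⟩ := (G.mem_incidenceFinset b2 f).1 hf2
    have : G.Adj b1 b2 := by
      have := sym2_eq hne hm1 hm2
      rw [this] at hfE
      exact hfE
    rcases hone b1 b2 this with ⟨hb1, _⟩ | ⟨_, hb2⟩
    · exact hb1 h1
    · exact hb2 h2
  have hm : G.edgeSet.ncard = B.ncard * k := by
    rw [Set.ncard_eq_toFinset_card', ← SimpleGraph.edgeFinset, hcover,
      Finset.card_biUnion hdisjB]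
    rw [Set.ncard_eq_toFinset_card B (Set.toFinite B)]
    rw [Finset.sum_congr rfl fun b hb => by
      rw [G.card_incidenceFinset_eq_degree b, hdegB b ((hmemB b).1 hb)]]
    rw [Finset.sum_const, smul_eq_mul]
  -- the EOP set
  have hexa : ∀ b ∈ B, ∃ a, G.neighborSet b ∩ A = {a} :=
    fun b hb => Set.ncard_eq_one.1 (hdeg b hb).1
  choose! ab hab using hexa
  have habAdj : ∀ b ∈ B, G.Adj b (ab b) := by
    intro b hb
    have : ab b ∈ G.neighborSet b ∩ A := by rw [hab b hb]; rfl
    exact this.1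
  have habA : ∀ b ∈ B, ab b ∈ A := by
    intro b hb
    have : ab b ∈ G.neighborSet b ∩ A := by rw [hab b hb]; rfl
    exact this.2
  have habUniq : ∀ b ∈ B, ∀ x, G.Adj b x → x ∈ A → x = ab b := by
    intro b hb x hx hxA
    have : x ∈ G.neighborSet b ∩ A := ⟨hx, hxA⟩
    rw [hab b hb] at this
    exact this
  set Bstar := (fun b => s(ab b, b)) '' B with hBstar
  have hinj : Set.InjOn (fun b => s(ab b, b)) B := by
    intro b1 h1 b2 h2 heq
    simp only at heq
    have : b1 ∈ s(ab b2, b2) := by rw [← heq]; simp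
    rcases Sym2.mem_iff.1 this with h | h
    · exact absurd ((h ▸ habA b2 h2)) (fun hA => hACB b1 (Or.inl hA) h1)
    · exact h
  have hBstarCard : Bstar.ncard = B.ncard := Set.ncard_image_of_injOn hinj
  have hBstarEOP : IsEOP G Bstar := by
    constructor
    · rintro e ⟨b, hb, rfl⟩
      exact (habAdj b hb).symm
    · rintro e1 ⟨b1, hb1, rfl⟩ e2 ⟨b2, hb2, rfl⟩ hne ⟨x, y, hx, hy, hadj, ne1, ne2⟩
      have hb12 : b1 ≠ b2 := fun h => hne (by rw [h])
      have hx' : x = ab b1 ∨ x = b1 := Sym2.mem_iff.1 hx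
      have hy' : y = ab b2 ∨ y = b2 := Sym2.mem_iff.1 hy
      rcases hx' with hx' | hx' <;> rcases hy' with hy' | hy'
      · rcases hone x y hadj with ⟨_, hyB⟩ | ⟨hxB, _⟩
        · exact hACB y (Or.inl (hy' ▸ habA b2 hb2)) hyB
        · exact hACB x (Or.inl (hx' ▸ habA b1 hb1)) hxB
      · -- x = ab b1, y = b2
        apply ne2
        rw [hx', hy'] at hadj ⊢
        rw [habUniq b2 hb2 (ab b1) hadj.symm (habA b1 hb1)]
      · -- x = b1, y = ab b2
        apply ne1
        rw [hx', hy'] at hadj ⊢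
        rw [habUniq b1 hb1 (ab b2) hadj (habA b2 hb2)]
        exact Sym2.eq_swap
      · -- x = b1, y = b2 : both in B
        rcases hone x y hadj with ⟨hxB, _⟩ | ⟨_, hyB⟩
        · exact hxB (hx' ▸ hb1)
        · exact hyB (hy' ▸ hb2)
  have hge : B.ncard ≤ eopNum G := hBstarCard ▸ le_eopNum hBstarEOP
  have hle : eopNum G ≤ B.ncard := by
    have h1 : eopNum G * k ≤ B.ncard * k := by
      rw [← hm]; exact eopNum_mul_le
    exact Nat.le_of_mul_le_mul_right h1 (by omega)
  rw [le_antisymm hle hge, hm]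

end Aux4

section Aux5
set_option linter.unusedSectionVars false
variable [Fintype V] [Nonempty V] {G : SimpleGraph V}

private lemma familyF_of_eq (hδ2 : 2 ≤ G.minDegree)
    (heq : eopNum G * G.minDegree = G.edgeSet.ncard) : InFamilyF G := by
  classical
  set k := G.minDegree with hkdef
  obtain ⟨P, hP, hPcard⟩ := exists_max_eop (G := G)
  have heqP : P.ncard * k = G.edgeSet.ncard := by rw [hPcard]; exact heq
  have hex : ∀ e ∈ P, ∃ v, v ∈ e ∧ ∀ e' ∈ P, e' ≠ e → v ∉ e' :=
    fun e he => exists_leaf hP he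
  choose! ℓ h1 h2 using hex
  have hc := eop_count hP ℓ h1 h2
  set F := (Set.toFinite P).toFinset with hF
  have hmemF : ∀ e, e ∈ F ↔ e ∈ P := fun e => Set.Finite.mem_toFinset _
  have hFcard : F.card = P.ncard := (Set.ncard_eq_toFinset_card P (Set.toFinite P)).symm
  have hles : ∀ e ∈ F, k ≤ G.degree (ℓ e) := fun e _ => G.minDegree_le_degree (ℓ e)
  have hsum_eq : ∑ e ∈ F, G.degree (ℓ e) = G.edgeSet.ncard := by
    refine le_antisymm hc.1 ?_
    calc G.edgeSet.ncard = P.ncard * k := heqP.symm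
      _ = ∑ _e ∈ F, k := by rw [Finset.sum_const, smul_eq_mul, hFcard, Nat.mul_comm]
      _ ≤ ∑ e ∈ F, G.degree (ℓ e) := Finset.sum_le_sum hles
  have hconst : ∑ e ∈ F, (k : ℕ) = ∑ e ∈ F, G.degree (ℓ e) := by
    rw [hsum_eq, Finset.sum_const, smul_eq_mul, hFcard, heqP]
  have hdegℓ : ∀ e ∈ P, G.degree (ℓ e) = k := by
    intro e he
    exact ((Finset.sum_eq_sum_iff_of_le hles).1 hconst e ((hmemF e).2 he)).symm
  have hcov : ∀ f ∈ G.edgeSet, ∃ e ∈ P, ℓ e ∈ f := hc.2 hsum_eq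
  -- partners
  have hprtex : ∀ e ∈ P, ∃ a, G.Adj (ℓ e) a ∧ e = s(ℓ e, a) :=
    fun e he => edge_rep (hP.1 he) (h1 e he)
  choose! prt hprtAdj hprtEq using hprtex
  have hprtMem : ∀ e ∈ P, prt e ∈ e := by
    intro e he
    have h : prt e ∈ s(ℓ e, prt e) := Sym2.mem_mk_right _ _
    rwa [← hprtEq e he] at h
  set As := prt '' P with hAs
  set Bs := ℓ '' P with hBs
  set Cs := (As ∪ Bs)ᶜ with hCs
  -- key facts
  have hnot2 : ∀ x y, G.Adj x y → x ∈ Bs → y ∈ Bs → False := by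
    rintro x y hadj ⟨e1, he1, rfl⟩ ⟨e2, he2, rfl⟩
    have hne : e1 ≠ e2 := by
      intro h; rw [h] at hadj; exact hadj.ne rfl
    have hne1 : s(ℓ e1, ℓ e2) ≠ e1 := by
      intro h
      exact h2 e2 he2 e1 he1 hne (h ▸ (by simp : ℓ e2 ∈ s(ℓ e1, ℓ e2)))
    have hne2 : s(ℓ e1, ℓ e2) ≠ e2 := by
      intro h
      exact h2 e1 he1 e2 he2 (fun hh => hne hh.symm) (h ▸ (by simp : ℓ e1 ∈ s(ℓ e1, ℓ e2)))
    exact hP.2 e1 he1 e2 he2 hne ⟨ℓ e1, ℓ e2, h1 e1 he1, h1 e2 he2, hadj, hne1, hne2⟩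
  have hcov' : ∀ x y, G.Adj x y → x ∈ Bs ∨ y ∈ Bs := by
    intro x y hadj
    obtain ⟨e, he, hme⟩ := hcov s(x, y) hadj
    rcases Sym2.mem_iff.1 hme with h | h
    · exact Or.inl ⟨e, he, h⟩
    · exact Or.inr ⟨e, he, h⟩
  have hK3 : ∀ e ∈ P, ∀ x, G.Adj (ℓ e) x → x ∈ As → x = prt e := by
    rintro e he x hadj ⟨e', he', rfl⟩
    by_cases hee : e' = e
    · subst hee; rfl
    · by_cases hfe : s(ℓ e, prt e') = e
      · have : prt e' ∈ e := by rw [← hfe]; simp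
        rw [hprtEq e he] at this
        rcases Sym2.mem_iff.1 this with h | h
        · exact absurd h.symm hadj.ne
        · exact h
      · by_cases hfe' : s(ℓ e, prt e') = e'
        · exact absurd (hfe' ▸ (by simp : ℓ e ∈ s(ℓ e, prt e'))) (h2 e he e' he' hee)
        · exact absurd ⟨ℓ e, prt e', h1 e he, hprtMem e' he', hadj, hfe, hfe'⟩
            (hP.2 e he e' he' (fun h => hee h.symm))
  have hnBsAC : ∀ x, x ∉ Bs → x ∈ As ∪ Cs := by
    intro x hx
    by_cases hA : x ∈ As
    · exact Or.inl hA
    · exact Or.inr (by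
        rw [hCs]
        intro hmem
        rcases hmem with h | h
        · exact hA h
        · exact hx h)
  refine ⟨hδ2, As, Bs, Cs, ?_, ?_, ?_, ?_, ?_, ?_⟩
  · rw [hCs]; exact Set.union_compl_self _
  · rw [Set.eq_empty_iff_forall_notMem]
    rintro x ⟨⟨e1, he1, rfl⟩, ⟨e2, he2, heq2⟩⟩
    by_cases hee : e1 = e2
    · subst hee
      exact (hprtAdj e1 he1).ne heq2
    · exact h2 e2 he2 e1 he1 hee (heq2 ▸ hprtMem e1 he1)
  · rw [Set.eq_empty_iff_forall_notMem]
    rintro x ⟨hxA, hxC⟩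
    exact hxC (Or.inl hxA)
  · rw [Set.eq_empty_iff_forall_notMem]
    rintro x ⟨hxB, hxC⟩
    exact hxC (Or.inr hxB)
  · intro a b hadj
    rcases hcov' a b hadj with h | h
    · right
      refine ⟨h, hnBsAC b fun hb => hnot2 a b hadj h hb⟩
    · left
      refine ⟨hnBsAC a fun ha => hnot2 a b hadj ha h, h⟩
  · rintro b ⟨e, he, rfl⟩
    have hNA : G.neighborSet (ℓ e) ∩ As = {prt e} := by
      apply Set.Subset.antisymm
      · rintro x ⟨hx1, hx2⟩
        exact hK3 e he x hx1 hx2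
      · rintro x hx
        rw [Set.mem_singleton_iff.1 hx]
        exact ⟨hprtAdj e he, ⟨e, he, rfl⟩⟩
    have hNB : ∀ x ∈ G.neighborSet (ℓ e), x ∉ Bs := by
      intro x hx hxB
      exact hnot2 (ℓ e) x hx ⟨e, he, rfl⟩ hxB
    have hsplit : G.neighborSet (ℓ e) =
        (G.neighborSet (ℓ e) ∩ As) ∪ (G.neighborSet (ℓ e) ∩ Cs) := by
      apply Set.Subset.antisymm
      · intro x hx
        rcases hnBsAC x (hNB x hx) with h | h
        · exact Or.inl ⟨hx, h⟩
        · exact Or.inr ⟨hx, h⟩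
      · rintro x (⟨hx, _⟩ | ⟨hx, _⟩) <;> exact hx
    have hdisj : Disjoint (G.neighborSet (ℓ e) ∩ As) (G.neighborSet (ℓ e) ∩ Cs) := by
      rw [Set.disjoint_left]
      rintro x ⟨_, hxA⟩ ⟨_, hxC⟩
      exact hxC (Or.inl hxA)
    have hcount := nbr_ncard (G := G) (ℓ e)
    nth_rw 1 [hsplit] at hcount
    rw [Set.ncard_union_eq hdisj (Set.toFinite _) (Set.toFinite _), hNA,
      Set.ncard_singleton, hdegℓ e he] at hcount
    exact ⟨by rw [hNA]; exact Set.ncard_singleton _, by omega⟩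

end Aux5

theorem stmt2 [Fintype V] (G : SimpleGraph V) (hE : G.edgeSet.Nonempty)
    (hδ : 1 ≤ G.minDegree) :
    eopNum G * G.minDegree = G.edgeSet.ncard ↔
      IsDisjointUnionOfStars G ∨ InFamilyF G := by
  have hNe : Nonempty V := by obtain ⟨e, _⟩ := hE; exact ⟨e.out.1⟩
  constructor
  · intro heq
    rcases Nat.lt_or_ge G.minDegree 2 with h2 | h2
    · left
      have h1 : G.minDegree = 1 := le_antisymm (by omega) hδ
      rw [h1, mul_one] at heq
      obtain ⟨P, hP, hPcard⟩ := exists_max_eop (G := G)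
      have hPeq : P = G.edgeSet :=
        Set.eq_of_subset_of_ncard_le hP.1 (by rw [hPcard, heq]) (Set.toFinite _)
      exact stars_of_eop_edgeSet hδ (hPeq ▸ hP)
    · right; exact familyF_of_eq h2 heq
  · rintro (hs | hF)
    · exact star_case hs hE hδ
    · exact familyF_case hF hE
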